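/- Let I be a finite set and x : I → ℝ a function taking pairwise distinct values (i.e., x is injective). Then ∑_{j∈I} ∑_{k∈I} ∑_{l∈I, l≠j} (x_l − x_k)/(x_j − x_l) = −|I|²(|I|−1)/2, where |I| denotes the cardinality of I. -/

import Mathlib

open Finset

theorem triple_sum_antisymmetric {ι : Type*} [DecidableEq ι] (I : Finset ι) (x : ι → ℝ)
    (hx : Set.InjOn x I) :
    ∑ j ∈ I, ∑ k ∈ I, ∑ l ∈ I.erase j, (x l - x k) / (x j - x l)
      = -((I.card : ℝ) ^ 2 * ((I.card : ℝ) - 1) / 2) := by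
  rcases I.eq_empty_or_nonempty with rfl | hI
  · simp
  have hcard : 1 ≤ I.card := Finset.card_pos.mpr hI
  set n : ℝ := (I.card : ℝ) with hn
  -- swap lemma for double sums over off-diagonal pairs
  have hswap : ∀ f : ι → ι → ℝ,
      ∑ j ∈ I, ∑ l ∈ I.erase j, f j l = ∑ j ∈ I, ∑ l ∈ I.erase j, f l j := by
    intro f
    have h1 : ∀ g : ι → ι → ℝ, ∑ j ∈ I, ∑ l ∈ I.erase j, g j l
        = ∑ j ∈ I, ∑ l ∈ I, if l ≠ j then g j l else 0 := by
      intro g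
      refine Finset.sum_congr rfl fun j _ => ?_
      rw [← Finset.filter_ne', Finset.sum_filter]
    rw [h1 f, h1 (fun j l => f l j)]
    rw [Finset.sum_comm]
    refine Finset.sum_congr rfl fun j _ => Finset.sum_congr rfl fun l _ => ?_
    simp only [ne_comm]
  -- constant double sum
  have hconst : ∀ c : ℝ, ∑ j ∈ I, ∑ _l ∈ I.erase j, c = n * (n - 1) * c := by
    intro c
    have : ∀ j ∈ I, ∑ _l ∈ I.erase j, c = (n - 1) * c := by
      intro j hj
      rw [Finset.sum_const, Finset.card_erase_of_mem hj, nsmul_eq_mul,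
        Nat.cast_sub hcard]
      norm_num
      exact Or.inl hn.symm
    rw [Finset.sum_congr rfl this, Finset.sum_const, nsmul_eq_mul, ← hn, mul_assoc]
  -- per-k inner double sum
  have hkey : ∀ k ∈ I, ∑ j ∈ I, ∑ l ∈ I.erase j, (x l - x k) / (x j - x l)
      = -(n * (n - 1) / 2) := by
    intro k _
    have hne : ∀ j ∈ I, ∀ l ∈ I.erase j, x j - x l ≠ 0 := by
      intro j hj l hl
      have hlI : l ∈ I := Finset.mem_of_mem_erase hl
      have hljne : l ≠ j := Finset.ne_of_mem_erase hl
      exact sub_ne_zero.mpr fun h => hljne (hx hlI hj h.symm)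
    have hg : ∑ j ∈ I, ∑ l ∈ I.erase j, (x j - x k) / (x j - x l)
        = n * (n - 1) / 2 := by
      have h2 : (2:ℝ) * ∑ j ∈ I, ∑ l ∈ I.erase j, (x j - x k) / (x j - x l)
          = n * (n - 1) := by
        have := hswap (fun j l => (x j - x k) / (x j - x l))
        calc (2:ℝ) * ∑ j ∈ I, ∑ l ∈ I.erase j, (x j - x k) / (x j - x l)
            = (∑ j ∈ I, ∑ l ∈ I.erase j, (x j - x k) / (x j - x l))
              + ∑ j ∈ I, ∑ l ∈ I.erase j, (x l - x k) / (x l - x j) := by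
              rw [← this]; ring
          _ = ∑ j ∈ I, ∑ l ∈ I.erase j,
              ((x j - x k) / (x j - x l) + (x l - x k) / (x l - x j)) := by
              rw [← Finset.sum_add_distrib]
              exact Finset.sum_congr rfl fun j _ => (Finset.sum_add_distrib).symm
          _ = ∑ j ∈ I, ∑ _l ∈ I.erase j, (1:ℝ) := by
              refine Finset.sum_congr rfl fun j hj => Finset.sum_congr rfl fun l hl => ?_
              have h := hne j hj l hl
              have h' : x l - x j ≠ 0 := by
                intro hc; exact h (by linarith [sub_eq_zero.mp hc, sub_eq_zero.mpr (sub_eq_zero.mp hc).symm])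
              field_simp
              ring
          _ = n * (n - 1) := by rw [hconst]; ring
      linarith
    have hsplit : ∑ j ∈ I, ∑ l ∈ I.erase j, (x l - x k) / (x j - x l)
        = (∑ j ∈ I, ∑ l ∈ I.erase j, (x j - x k) / (x j - x l))
          - ∑ j ∈ I, ∑ _l ∈ I.erase j, (1:ℝ) := by
      rw [← Finset.sum_sub_distrib]
      refine Finset.sum_congr rfl fun j hj => ?_
      rw [← Finset.sum_sub_distrib]
      refine Finset.sum_congr rfl fun l hl => ?_
      have h := hne j hj l hl
      field_simp
      ring
    rw [hsplit, hg, hconst]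
    ring
  -- put it together
  rw [Finset.sum_comm]
  rw [Finset.sum_congr rfl hkey, Finset.sum_const, nsmul_eq_mul, ← hn]
  ring
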